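/- Let n ≥ 1, let d₁, …, d_n < 0, m₁, …, m_n ≤ 0, L₁, …, L_n > 0, and let b₁, …, b_n : ℝ → ℝ be continuously differentiable. For k ∈ {1, …, n} define r_k(t,x) = Σ_{i=k}^n exp(m_k·x/d_k - Σ_{j=k}^i m_j·L_j/d_j)·b_i(t - x/d_k + Σ_{j=k}^i L_j/d_j). Then: (i) each r_k satisfies (r_k)_t + d_k·(r_k)_x = m_k·r_k; (ii) r_n(t, L_n) = b_n(t) for all t; and (iii) for each k ∈ {1, …, n-1}, r_k(t, L_k) = r_{k+1}(t, 0) + b_k(t) for all t. -/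

import Mathlib

/-- Large-time part of Theorem 3: the explicit formula solves the coupled system of
transport equations on a linear graph of `n` pipes, with boundary condition at the
end of the last pipe and coupling conditions `r_k(t, L_k) = r_{k+1}(t,0) + b_k(t)`. -/
theorem stmt_13 (n : ℕ) (hn : 1 ≤ n) (d m L : ℕ → ℝ) (b : ℕ → ℝ → ℝ)
    (hd : ∀ k ∈ Finset.Icc 1 n, d k < 0) (hm : ∀ k ∈ Finset.Icc 1 n, m k ≤ 0)
    (hL : ∀ k ∈ Finset.Icc 1 n, 0 < L k)
    (hb : ∀ k ∈ Finset.Icc 1 n, ContDiff ℝ 1 (b k)) :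
    let r : ℕ → ℝ → ℝ → ℝ := fun k t x =>
      ∑ i ∈ Finset.Icc k n,
        Real.exp (m k * x / d k - ∑ j ∈ Finset.Icc k i, m j * L j / d j) *
          b i (t - x / d k + ∑ j ∈ Finset.Icc k i, L j / d j)
    (∀ k ∈ Finset.Icc 1 n, ∀ t x : ℝ, ∃ rt rx : ℝ,
        HasDerivAt (fun s => r k s x) rt t ∧
        HasDerivAt (fun y => r k t y) rx x ∧
        rt + d k * rx = m k * r k t x) ∧
    (∀ t : ℝ, r n t (L n) = b n t) ∧
    (∀ k ∈ Finset.Icc 1 (n - 1), ∀ t : ℝ, r k t (L k) = r (k + 1) t 0 + b k t) := by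
  intro r
  have hsplit : ∀ (a c : ℕ), a ≤ c → ∀ f : ℕ → ℝ,
      ∑ j ∈ Finset.Icc a c, f j = f a + ∑ j ∈ Finset.Icc (a+1) c, f j := by
    intro a c hac f
    rw [Finset.Icc_add_one_left_eq_Ioc, ← Finset.Ioc_insert_left hac,
      Finset.sum_insert Finset.left_notMem_Ioc]
  refine ⟨?_, ?_, ?_⟩
  · intro k hk t x
    have hdk : d k ≠ 0 := (hd k hk).ne
    have hbd : ∀ i ∈ Finset.Icc k n, Differentiable ℝ (b i) := by
      intro i hi
      have h1 := (Finset.mem_Icc.mp hk).1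
      have h2 := Finset.mem_Icc.mp hi
      exact (hb i (Finset.mem_Icc.mpr ⟨le_trans h1 h2.1, h2.2⟩)).differentiable one_ne_zero
    refine ⟨∑ i ∈ Finset.Icc k n,
        Real.exp (m k * x / d k - ∑ j ∈ Finset.Icc k i, m j * L j / d j) *
          (deriv (b i) (t - x / d k + ∑ j ∈ Finset.Icc k i, L j / d j) * 1),
      ∑ i ∈ Finset.Icc k n,
        ((Real.exp (m k * x / d k - ∑ j ∈ Finset.Icc k i, m j * L j / d j) * (m k * 1 / d k)) *
          b i (t - x / d k + ∑ j ∈ Finset.Icc k i, L j / d j)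
        + Real.exp (m k * x / d k - ∑ j ∈ Finset.Icc k i, m j * L j / d j) *
          (deriv (b i) (t - x / d k + ∑ j ∈ Finset.Icc k i, L j / d j) * (0 - 1 / d k))),
      ?_, ?_, ?_⟩
    · simp only [r]
      refine HasDerivAt.fun_sum fun i hi => ?_
      have hin : HasDerivAt (fun s : ℝ => s - x / d k + ∑ j ∈ Finset.Icc k i, L j / d j)
          1 t := by
        simpa using ((hasDerivAt_id t).sub_const (x / d k)).add_const
          (∑ j ∈ Finset.Icc k i, L j / d j)
      have hbi := ((hbd i hi) (t - x / d k + ∑ j ∈ Finset.Icc k i, L j / d j)).hasDerivAt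
      exact (hbi.comp t hin).const_mul _
    · simp only [r]
      refine HasDerivAt.fun_sum fun i hi => ?_
      have hE : HasDerivAt
          (fun y : ℝ => Real.exp (m k * y / d k - ∑ j ∈ Finset.Icc k i, m j * L j / d j))
          (Real.exp (m k * x / d k - ∑ j ∈ Finset.Icc k i, m j * L j / d j) *
            (m k * 1 / d k)) x :=
        ((((hasDerivAt_id x).const_mul (m k)).div_const (d k)).sub_const _).exp
      have hinner : HasDerivAt (fun y : ℝ => t - y / d k + ∑ j ∈ Finset.Icc k i, L j / d j)
          (0 - 1 / d k) x := by
        have := ((hasDerivAt_const x t).sub ((hasDerivAt_id x).div_const (d k))).add_const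
          (∑ j ∈ Finset.Icc k i, L j / d j)
        simpa using this
      have hbi := ((hbd i hi) (t - x / d k + ∑ j ∈ Finset.Icc k i, L j / d j)).hasDerivAt
      exact hE.mul (hbi.comp x hinner)
    · simp only [r, Finset.mul_sum, ← Finset.sum_add_distrib]
      refine Finset.sum_congr rfl fun i hi => ?_
      field_simp
      ring
  · intro t
    simp only [r, Finset.Icc_self, Finset.sum_singleton, sub_self, Real.exp_zero, one_mul,
      sub_add_cancel]
  · intro k hk t
    obtain ⟨hk1, hk2⟩ := Finset.mem_Icc.mp hk
    have hkn : k + 1 ≤ n := by omega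
    simp only [r]
    rw [hsplit k n (by omega)]
    have h1 : Real.exp (m k * L k / d k - ∑ j ∈ Finset.Icc k k, m j * L j / d j) *
        b k (t - L k / d k + ∑ j ∈ Finset.Icc k k, L j / d j) = b k t := by
      simp
    have h2 : (∑ i ∈ Finset.Icc (k+1) n,
        Real.exp (m k * L k / d k - ∑ j ∈ Finset.Icc k i, m j * L j / d j) *
          b i (t - L k / d k + ∑ j ∈ Finset.Icc k i, L j / d j)) =
        ∑ i ∈ Finset.Icc (k+1) n,
        Real.exp (m (k+1) * 0 / d (k+1) - ∑ j ∈ Finset.Icc (k+1) i, m j * L j / d j) *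
          b i (t - 0 / d (k+1) + ∑ j ∈ Finset.Icc (k+1) i, L j / d j) := by
      refine Finset.sum_congr rfl fun i hi => ?_
      have hki : k ≤ i := by
        have := (Finset.mem_Icc.mp hi).1; omega
      rw [hsplit k i hki (fun j => m j * L j / d j), hsplit k i hki (fun j => L j / d j)]
      have e1 : m k * L k / d k - (m k * L k / d k +
          ∑ j ∈ Finset.Icc (k+1) i, m j * L j / d j) =
          m (k+1) * 0 / d (k+1) - ∑ j ∈ Finset.Icc (k+1) i, m j * L j / d j := by ring
      have e2 : t - L k / d k + (L k / d k + ∑ j ∈ Finset.Icc (k+1) i, L j / d j) =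
          t - 0 / d (k+1) + ∑ j ∈ Finset.Icc (k+1) i, L j / d j := by ring
      rw [e1, e2]
    rw [h1, h2, add_comm]
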